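/- Let W > 0, let σ, κ : ℝ → ℝ be continuous and strictly positive on [0,W], and let a > 0, b > 0, E ∈ ℝ. Suppose (φe¹, φl¹) and (φe², φl²) are both solutions of the 1D coupled porous-electrode system on [0,W], and their Neumann data agree: σ(0)·(φe¹)'(0) = σ(0)·(φe²)'(0), σ(W)·(φe¹)'(W) = σ(W)·(φe²)'(W), κ(0)·(φl¹)'(0) = κ(0)·(φl²)'(0), and κ(W)·(φl¹)'(W) = κ(W)·(φl²)'(W). Then there exists a constant C ∈ ℝ such that φe¹(x) = φe²(x) + C and φl¹(x) = φl²(x) + C for all x ∈ [0,W]. -/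

import Mathlib

open Set

noncomputable section

/-- `(φe, φl)` is a solution of the 1D coupled porous-electrode system on `[0, W]`:
`φe, φl` are C¹ on `[0,W]`, the fluxes `σ·φe'` and `κ·φl'` are C¹ on `[0,W]`, and
`(σ·φe')' = a·sinh(b·(φe − φl − E))`, `(κ·φl')' = −a·sinh(b·(φe − φl − E))` on `[0,W]`. -/
def IsSolution1D (W : ℝ) (σ κ : ℝ → ℝ) (a b E : ℝ) (φe φl : ℝ → ℝ) : Prop :=
  ContDiffOn ℝ 1 φe (Icc 0 W) ∧ ContDiffOn ℝ 1 φl (Icc 0 W) ∧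
  ContDiffOn ℝ 1 (fun x => σ x * deriv φe x) (Icc 0 W) ∧
  ContDiffOn ℝ 1 (fun x => κ x * deriv φl x) (Icc 0 W) ∧
  (∀ x ∈ Icc 0 W, deriv (fun y => σ y * deriv φe y) x
      = a * Real.sinh (b * (φe x - φl x - E))) ∧
  (∀ x ∈ Icc 0 W, deriv (fun y => κ y * deriv φl y) x
      = -(a * Real.sinh (b * (φe x - φl x - E))))

lemma aux_sinh_pos (a b t₁ t₂ : ℝ) (ha : 0 < a) (hb : 0 < b) (h : t₁ ≠ t₂) :
    0 < a * (Real.sinh (b * t₁) - Real.sinh (b * t₂)) * (t₁ - t₂) := by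
  rcases lt_or_gt_of_ne h with h | h
  · have hs : Real.sinh (b * t₁) < Real.sinh (b * t₂) :=
      Real.sinh_lt_sinh.2 (by nlinarith)
    have h1 : Real.sinh (b * t₁) - Real.sinh (b * t₂) < 0 := by linarith
    have h2 : t₁ - t₂ < 0 := by linarith
    have := mul_pos ha (mul_pos_of_neg_of_neg h1 h2)
    linarith [mul_assoc a (Real.sinh (b * t₁) - Real.sinh (b * t₂)) (t₁ - t₂)]
  · have hs : Real.sinh (b * t₂) < Real.sinh (b * t₁) :=
      Real.sinh_lt_sinh.2 (by nlinarith)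
    have h1 : 0 < Real.sinh (b * t₁) - Real.sinh (b * t₂) := by linarith
    have h2 : 0 < t₁ - t₂ := by linarith
    have := mul_pos ha (mul_pos h1 h2)
    linarith [mul_assoc a (Real.sinh (b * t₁) - Real.sinh (b * t₂)) (t₁ - t₂)]

lemma aux_sinh_nonneg (a b t₁ t₂ : ℝ) (ha : 0 < a) (hb : 0 < b) :
    0 ≤ a * (Real.sinh (b * t₁) - Real.sinh (b * t₂)) * (t₁ - t₂) := by
  by_cases h : t₁ = t₂
  · simp [h]
  · exact (aux_sinh_pos a b t₁ t₂ ha hb h).le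

/-- Uniqueness up to a shared additive constant for the galvanostatic (all-Neumann)
1D coupled porous-electrode system. -/
theorem uniqueness_up_to_shared_constant
    (W : ℝ) (hW : 0 < W) (σ κ : ℝ → ℝ)
    (hσc : ContinuousOn σ (Icc 0 W)) (hκc : ContinuousOn κ (Icc 0 W))
    (hσpos : ∀ x ∈ Icc 0 W, 0 < σ x) (hκpos : ∀ x ∈ Icc 0 W, 0 < κ x)
    (a b E : ℝ) (ha : 0 < a) (hb : 0 < b)
    (φe₁ φl₁ φe₂ φl₂ : ℝ → ℝ)
    (h₁ : IsSolution1D W σ κ a b E φe₁ φl₁)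
    (h₂ : IsSolution1D W σ κ a b E φe₂ φl₂)
    (hbc₁ : σ 0 * deriv φe₁ 0 = σ 0 * deriv φe₂ 0)
    (hbc₂ : σ W * deriv φe₁ W = σ W * deriv φe₂ W)
    (hbc₃ : κ 0 * deriv φl₁ 0 = κ 0 * deriv φl₂ 0)
    (hbc₄ : κ W * deriv φl₁ W = κ W * deriv φl₂ W) :
    ∃ C : ℝ, ∀ x ∈ Icc 0 W, φe₁ x = φe₂ x + C ∧ φl₁ x = φl₂ x + C := by
  obtain ⟨he₁, hl₁, hfe₁, hfl₁, heq₁, hleq₁⟩ := h₁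
  obtain ⟨he₂, hl₂, hfe₂, hfl₂, heq₂, hleq₂⟩ := h₂
  have h0W : (0 : ℝ) ∈ Icc 0 W := ⟨le_refl 0, hW.le⟩
  have hWW : W ∈ Icc 0 W := ⟨hW.le, le_refl W⟩
  -- differentiability at interior points
  have hDA : ∀ f : ℝ → ℝ, ContDiffOn ℝ 1 f (Icc 0 W) → ∀ x ∈ Ioo 0 W,
      HasDerivAt f (deriv f x) x := by
    intro f hf x hx
    exact (((hf.differentiableOn one_ne_zero) x (Ioo_subset_Icc_self hx)).differentiableAt
      (Icc_mem_nhds hx.1 hx.2)).hasDerivAt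
  -- the energy function
  set F : ℝ → ℝ := fun x =>
    (σ x * deriv φe₁ x - σ x * deriv φe₂ x) * (φe₁ x - φe₂ x) +
    (κ x * deriv φl₁ x - κ x * deriv φl₂ x) * (φl₁ x - φl₂ x) with hF
  set G : ℝ → ℝ := fun x =>
    σ x * (deriv φe₁ x - deriv φe₂ x) ^ 2 + κ x * (deriv φl₁ x - deriv φl₂ x) ^ 2 +
    a * (Real.sinh (b * (φe₁ x - φl₁ x - E)) - Real.sinh (b * (φe₂ x - φl₂ x - E))) *
      ((φe₁ x - φl₁ x - E) - (φe₂ x - φl₂ x - E)) with hG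
  have hFd : ∀ x ∈ Ioo 0 W, HasDerivAt F (G x) x := by
    intro x hx
    have hxI : x ∈ Icc 0 W := Ioo_subset_Icc_self hx
    have de₁ := hDA _ he₁ x hx
    have de₂ := hDA _ he₂ x hx
    have dl₁ := hDA _ hl₁ x hx
    have dl₂ := hDA _ hl₂ x hx
    have fe₁ : HasDerivAt (fun y => σ y * deriv φe₁ y)
        (a * Real.sinh (b * (φe₁ x - φl₁ x - E))) x := by
      have := hDA _ hfe₁ x hx; rwa [heq₁ x hxI] at this
    have fe₂ : HasDerivAt (fun y => σ y * deriv φe₂ y)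
        (a * Real.sinh (b * (φe₂ x - φl₂ x - E))) x := by
      have := hDA _ hfe₂ x hx; rwa [heq₂ x hxI] at this
    have fl₁ : HasDerivAt (fun y => κ y * deriv φl₁ y)
        (-(a * Real.sinh (b * (φe₁ x - φl₁ x - E)))) x := by
      have := hDA _ hfl₁ x hx; rwa [hleq₁ x hxI] at this
    have fl₂ : HasDerivAt (fun y => κ y * deriv φl₂ y)
        (-(a * Real.sinh (b * (φe₂ x - φl₂ x - E)))) x := by
      have := hDA _ hfl₂ x hx; rwa [hleq₂ x hxI] at this
    have h := ((fe₁.sub fe₂).mul (de₁.sub de₂)).add ((fl₁.sub fl₂).mul (dl₁.sub dl₂))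
    refine h.congr_deriv ?_
    simp only [hG, Pi.sub_apply]
    ring
  have hGnonneg : ∀ x ∈ Ioo 0 W, 0 ≤ G x := by
    intro x hx
    have hxI : x ∈ Icc 0 W := Ioo_subset_Icc_self hx
    have h1 : 0 ≤ σ x * (deriv φe₁ x - deriv φe₂ x) ^ 2 :=
      mul_nonneg (hσpos x hxI).le (sq_nonneg _)
    have h2 : 0 ≤ κ x * (deriv φl₁ x - deriv φl₂ x) ^ 2 :=
      mul_nonneg (hκpos x hxI).le (sq_nonneg _)
    have h3 := aux_sinh_nonneg a b (φe₁ x - φl₁ x - E) (φe₂ x - φl₂ x - E) ha hb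
    simp only [hG]
    linarith
  have hFcont : ContinuousOn F (Icc 0 W) :=
    (((hfe₁.continuousOn.sub hfe₂.continuousOn).mul
      (he₁.continuousOn.sub he₂.continuousOn)).add
      ((hfl₁.continuousOn.sub hfl₂.continuousOn).mul
      (hl₁.continuousOn.sub hl₂.continuousOn)))
  have hFmono : MonotoneOn F (Icc 0 W) := by
    apply monotoneOn_of_deriv_nonneg (convex_Icc 0 W) hFcont
    · rw [interior_Icc]
      intro x hx
      exact (hFd x hx).differentiableAt.differentiableWithinAt
    · rw [interior_Icc]
      intro x hx
      rw [(hFd x hx).deriv]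
      exact hGnonneg x hx
  have hF0 : F 0 = 0 := by
    simp only [hF]
    rw [hbc₁, hbc₃]
    ring
  have hFW : F W = 0 := by
    simp only [hF]
    rw [hbc₂, hbc₄]
    ring
  have hFzero : ∀ x ∈ Icc 0 W, F x = 0 := by
    intro x hx
    have h1 : F 0 ≤ F x := hFmono h0W hx hx.1
    have h2 : F x ≤ F W := hFmono hx hWW hx.2
    linarith [hF0, hFW]
  have hGzero : ∀ x ∈ Ioo 0 W, G x = 0 := by
    intro x hx
    have hEq : F =ᶠ[nhds x] fun _ => (0 : ℝ) := by
      filter_upwards [Icc_mem_nhds hx.1 hx.2] with y hy using hFzero y hy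
    have h1 : HasDerivAt (fun _ : ℝ => (0 : ℝ)) (G x) x :=
      (hFd x hx).congr_of_eventuallyEq hEq.symm
    have h2 : HasDerivAt (fun _ : ℝ => (0 : ℝ)) 0 x := hasDerivAt_const x 0
    exact h1.unique h2
  -- pointwise consequences on the interior
  have hterms : ∀ x ∈ Ioo 0 W,
      deriv φe₁ x = deriv φe₂ x ∧ deriv φl₁ x = deriv φl₂ x ∧
      φe₁ x - φl₁ x = φe₂ x - φl₂ x := by
    intro x hx
    have hxI : x ∈ Icc 0 W := Ioo_subset_Icc_self hx
    have h1 : 0 ≤ σ x * (deriv φe₁ x - deriv φe₂ x) ^ 2 :=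
      mul_nonneg (hσpos x hxI).le (sq_nonneg _)
    have h2 : 0 ≤ κ x * (deriv φl₁ x - deriv φl₂ x) ^ 2 :=
      mul_nonneg (hκpos x hxI).le (sq_nonneg _)
    have h3 := aux_sinh_nonneg a b (φe₁ x - φl₁ x - E) (φe₂ x - φl₂ x - E) ha hb
    have hGx := hGzero x hx
    simp only [hG] at hGx
    refine ⟨?_, ?_, ?_⟩
    · have hsq : (deriv φe₁ x - deriv φe₂ x) ^ 2 = 0 := by
        have := (hσpos x hxI)
        nlinarith
      have := pow_eq_zero_iff (n := 2) (by norm_num) |>.1 hsq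
      linarith [sub_eq_zero.1 this]
    · have hsq : (deriv φl₁ x - deriv φl₂ x) ^ 2 = 0 := by
        have := (hκpos x hxI)
        nlinarith
      have := pow_eq_zero_iff (n := 2) (by norm_num) |>.1 hsq
      linarith [sub_eq_zero.1 this]
    · by_contra hne
      have hne' : φe₁ x - φl₁ x - E ≠ φe₂ x - φl₂ x - E := by
        intro h; apply hne; linarith
      have := aux_sinh_pos a b (φe₁ x - φl₁ x - E) (φe₂ x - φl₂ x - E) ha hb hne'
      nlinarith
  -- the differences are constant on [0, W]
  have hconst : ∀ f₁ f₂ : ℝ → ℝ, ContDiffOn ℝ 1 f₁ (Icc 0 W) → ContDiffOn ℝ 1 f₂ (Icc 0 W) →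
      (∀ x ∈ Ioo 0 W, deriv f₁ x = deriv f₂ x) →
      ∀ x ∈ Icc 0 W, f₁ x - f₂ x = f₁ 0 - f₂ 0 := by
    intro f₁ f₂ hf₁ hf₂ hd x hx
    have hdz : ∀ y ∈ Ioo 0 W, HasDerivAt (fun z => f₁ z - f₂ z) 0 y := by
      intro y hy
      have h := (hDA _ hf₁ y hy).sub (hDA _ hf₂ y hy)
      rwa [hd y hy, sub_self] at h
    have hcont : ContinuousOn (fun z => f₁ z - f₂ z) (Icc 0 W) :=
      hf₁.continuousOn.sub hf₂.continuousOn
    have hdiff : DifferentiableOn ℝ (fun z => f₁ z - f₂ z) (interior (Icc 0 W)) := by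
      rw [interior_Icc]; intro y hy
      exact (hdz y hy).differentiableAt.differentiableWithinAt
    have hM : MonotoneOn (fun z => f₁ z - f₂ z) (Icc 0 W) := by
      apply monotoneOn_of_deriv_nonneg (convex_Icc 0 W) hcont hdiff
      rw [interior_Icc]; intro y hy; rw [(hdz y hy).deriv]
    have hA : AntitoneOn (fun z => f₁ z - f₂ z) (Icc 0 W) := by
      apply antitoneOn_of_deriv_nonpos (convex_Icc 0 W) hcont hdiff
      rw [interior_Icc]; intro y hy; rw [(hdz y hy).deriv]
    exact le_antisymm (hA h0W hx hx.1) (hM h0W hx hx.1)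
  have hUe := hconst φe₁ φe₂ he₁ he₂ (fun x hx => (hterms x hx).1)
  have hUl := hconst φl₁ φl₂ hl₁ hl₂ (fun x hx => (hterms x hx).2.1)
  -- the two constants agree
  have hmid : W / 2 ∈ Ioo 0 W := ⟨by linarith, by linarith⟩
  have hmidI : W / 2 ∈ Icc 0 W := Ioo_subset_Icc_self hmid
  have hEl : φe₁ 0 - φe₂ 0 = φl₁ 0 - φl₂ 0 := by
    have h1 := hUe (W / 2) hmidI
    have h2 := hUl (W / 2) hmidI
    have h3 := (hterms (W / 2) hmid).2.2
    linarith
  refine ⟨φe₁ 0 - φe₂ 0, fun x hx => ⟨by linarith [hUe x hx], ?_⟩⟩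
  have := hUl x hx
  linarith
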